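/- Let S = ⟨A ∣ 1 → v⟩ be a one-rule SRS whose left-hand side is the empty word, and suppose v contains at least two distinct letters (equivalently, v ≠ bⁿ for every letter b ∈ A and every n). Then for every natural number k ≥ 1, the graph M_k is embeddable in the reduction graph G_S. -/
import Mathlib


/-- One-step reduction of the one-rule SRS `⟨A ∣ u → v⟩`: `w →_S w'`. -/
def Step {A : Type*} (u v w w' : List A) : Prop :=
  ∃ p q : List A, w = p ++ u ++ q ∧ w' = p ++ v ++ q

/-- One-step reduction of `⟨A ∣ u → v⟩` carried out at position `i`. -/
def StepAt {A : Type*} (u v : List A) (i : ℕ) (w w' : List A) : Prop :=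
  ∃ p q : List A, p.length = i ∧ w = p ++ u ++ q ∧ w' = p ++ v ++ q

/-- The diamond graph `M_k` is embeddable in the reduction graph `G_S` of
`S = ⟨A ∣ u → v⟩`: there are pairwise distinct words `x, y, z_1, …, z_k`
with `x →_S z_i` and `z_i →_S y` for every `i`. -/
def MkEmbeddable {A : Type*} (u v : List A) (k : ℕ) : Prop :=
  ∃ (x y : List A) (z : Fin k → List A),
    Function.Injective z ∧ (∀ i, x ≠ z i) ∧ (∀ i, y ≠ z i) ∧ x ≠ y ∧
    ∀ i, Step u v x (z i) ∧ Step u v (z i) y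

/-- Projection from the decorated alphabet `A ⊕ A` (`inl a` = plain letter `a`,
`inr a` = decorated letter `a•`) back to `A`. -/
def proj {A : Type*} : A ⊕ A → A := Sum.elim id id

/-- One-step reduction of the decorated SRS `S̄` carried out at position `i`:
some word `ū` projecting to `u` is replaced by the fully decorated `v•`. -/
def DecStepAt {A : Type*} (u v : List A) (i : ℕ) (w w' : List (A ⊕ A)) : Prop :=
  ∃ p q ubar : List (A ⊕ A),
    p.length = i ∧ ubar.map proj = u ∧
    w = p ++ ubar ++ q ∧ w' = p ++ v.map Sum.inr ++ q

/-- The leftmost decorated letter of `w` is at position `i`. -/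
def FirstDecorated {A : Type*} (w : List (A ⊕ A)) (i : ℕ) : Prop :=
  (∃ a : A, w[i]? = some (Sum.inr a)) ∧
  ∀ j < i, ∀ a : A, w[j]? ≠ some (Sum.inr a)

/-- The one-rule SRS `⟨A ∣ u → v⟩` is left cancellative:
`u, v` are nonempty and their first letters are distinct. -/
def LeftCancellative {A : Type*} (u v : List A) : Prop :=
  u ≠ [] ∧ v ≠ [] ∧ u.head? ≠ v.head?

/-- `w` is bordered with `T`: `T` is both a prefix and a suffix of `w`. -/
def Bordered {A : Type*} (T w : List A) : Prop :=
  T <+: w ∧ T <:+ w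

/-- `T` is self-overlap-free: `OVL(T) = ∅`, i.e. there is no nonempty `w`
with `T = x ++ w = w ++ y` for nonempty `x, y`. -/
def SelfOverlapFree {A : Type*} (T : List A) : Prop :=
  ∀ w x y : List A, w ≠ [] → x ≠ [] → y ≠ [] → T = x ++ w → T = w ++ y → False

/-- `glue T [R₁, …, R_k] = T R₁ T R₂ ⋯ T R_k T`, the word of `Bord_T` whose
canonical decomposition is `R₁, …, R_k`; thus `φ_T (glue T Rs) = Rs`
(a word of length `Rs.length` over the alphabet `B` of `T`-free words). -/
def glue {A : Type*} (T : List A) : List (List A) → List A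
  | [] => T
  | R :: Rs => T ++ R ++ glue T Rs

namespace MkAux

/-- `rep u n = u^n`. -/
def rep {A : Type*} (u : List A) : ℕ → List A
  | 0 => []
  | n + 1 => u ++ rep u n

lemma rep_add {A : Type*} (u : List A) (m n : ℕ) :
    rep u (m + n) = rep u m ++ rep u n := by
  induction m with
  | zero => simp [rep]
  | succ m ih => rw [Nat.succ_add]; simp [rep, ih]

lemma length_rep {A : Type*} (u : List A) (n : ℕ) :
    (rep u n).length = n * u.length := by
  induction n with
  | zero => simp [rep]
  | succ n ih => simp [rep, ih, Nat.succ_mul]; ring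

lemma get_mid {A : Type*} (a w t : List A) (n : ℕ) (h : n < w.length) :
    (a ++ (w ++ t))[a.length + n]? = w[n]? := by
  rw [List.getElem?_append_right (Nat.le_add_right _ _), Nat.add_sub_cancel_left,
    List.getElem?_append_left h]

lemma exists_diff {A : Type*} (v : List A) (hv : ∃ a ∈ v, ∃ b ∈ v, a ≠ b) :
    ∃ s, s < v.length ∧ v[s]? ≠ v[0]? := by
  obtain ⟨a, ha, b, hb, hab⟩ := hv
  have hvpos : 0 < v.length := List.length_pos_iff.mpr (by rintro rfl; simp at ha)
  obtain ⟨ia, hia, hga⟩ := List.mem_iff_getElem.mp ha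
  obtain ⟨ib, hib, hgb⟩ := List.mem_iff_getElem.mp hb
  by_cases h : a = v[0]'hvpos
  · refine ⟨ib, hib, ?_⟩
    rw [List.getElem?_eq_getElem hib, List.getElem?_eq_getElem hvpos]
    intro hc
    exact hab (h.trans ((Option.some_inj.mp hc).symm.trans hgb))
  · refine ⟨ia, hia, ?_⟩
    rw [List.getElem?_eq_getElem hia, List.getElem?_eq_getElem hvpos]
    intro hc
    exact h (hga.symm.trans (Option.some_inj.mp hc))

lemma main {A : Type*} (v : List A) (s : ℕ) (hs : s < v.length)
    (hsne : v[s]? ≠ v[0]?) (k : ℕ) (hk : 1 ≤ k) :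
    MkEmbeddable ([] : List A) v k := by
  have hvpos : 0 < v.length := Nat.lt_of_le_of_lt (Nat.zero_le s) hs
  set u : List A := v.take s ++ (v ++ v.drop s) with hu
  have hulen : u.length = v.length + v.length := by
    simp [hu]
    omega
  have hspre : (v.take s).length = s := by
    simp [Nat.le_of_lt hs]
  have hus : u[s]? = v[0]? := by
    have := get_mid (v.take s) v (v.drop s) 0 hvpos
    rwa [hspre, Nat.add_zero] at this
  -- the words
  refine ⟨v ++ (rep u (k-1) ++ v), v ++ (rep u k ++ v),
    fun i => (v ++ rep u ↑i) ++ (v ++ (rep u (k-1-↑i) ++ v)), ?_, ?_, ?_, ?_, ?_⟩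
  · -- injectivity
    have key : ∀ i j : Fin k, (i : ℕ) < (j : ℕ) →
        ((v ++ rep u ↑i) ++ (v ++ (rep u (k-1-↑i) ++ v)))
          ≠ ((v ++ rep u ↑j) ++ (v ++ (rep u (k-1-↑j) ++ v))) := by
      intro i j hij heq
      have hrepj : rep u ↑j = rep u ↑i ++ (u ++ rep u (↑j - ↑i - 1)) := by
        have h1 : (j : ℕ) = ↑i + (1 + (↑j - ↑i - 1)) := by omega
        rw [h1, rep_add, rep_add]
        simp [rep]
      have hzj : (v ++ rep u ↑j) ++ (v ++ (rep u (k-1-↑j) ++ v))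
          = (v ++ rep u ↑i) ++ (u ++ (rep u (↑j - ↑i - 1) ++ (v ++ (rep u (k-1-↑j) ++ v)))) := by
        rw [hrepj]; simp [List.append_assoc]
      have h1 : ((v ++ rep u ↑i) ++ (v ++ (rep u (k-1-↑i) ++ v)))[(v ++ rep u ↑i).length + s]?
          = v[s]? := get_mid _ _ _ s hs
      have h2 : ((v ++ rep u ↑j) ++ (v ++ (rep u (k-1-↑j) ++ v)))[(v ++ rep u ↑i).length + s]?
          = u[s]? := by
        rw [hzj]; exact get_mid _ _ _ s (by omega)
      rw [heq, h2, hus] at h1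
      exact hsne h1.symm
    intro i j heq
    rcases Nat.lt_trichotomy (i : ℕ) (j : ℕ) with h | h | h
    · exact absurd heq (key i j h)
    · exact Fin.ext h
    · exact absurd heq.symm (key j i h)
  · -- x ≠ z i
    intro i heq
    have := congrArg List.length heq
    have hmul : (↑i : ℕ) * u.length + (k-1-↑i) * u.length = (k-1) * u.length := by
      rw [← Nat.add_mul]; congr 1; omega
    simp only [List.length_append, length_rep] at this
    omega
  · -- y ≠ z i
    intro i heq
    have := congrArg List.length heq
    have hmul : (↑i : ℕ) * u.length + (k-1-↑i) * u.length = (k-1) * u.length := by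
      rw [← Nat.add_mul]; congr 1; omega
    have hmul2 : (k-1) * u.length + u.length = k * u.length := by
      rw [← Nat.succ_mul]; congr 1; omega
    simp only [List.length_append, length_rep] at this
    omega
  · -- x ≠ y
    intro heq
    have := congrArg List.length heq
    have hmul2 : (k-1) * u.length + u.length = k * u.length := by
      rw [← Nat.succ_mul]; congr 1; omega
    have hupos : 0 < u.length := by omega
    simp only [List.length_append, length_rep] at this
    omega
  · -- the steps
    intro i
    have hisum : (↑i : ℕ) + (k - 1 - ↑i) = k - 1 := by omega
    constructor
    · refine ⟨v ++ rep u ↑i, rep u (k-1-↑i) ++ v, ?_, ?_⟩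
      · have : rep u (k-1) = rep u ↑i ++ rep u (k-1-↑i) := by
          rw [← rep_add, hisum]
        rw [this]; simp [List.append_assoc]
      · simp [List.append_assoc]
    · refine ⟨(v ++ rep u ↑i) ++ v.take s, v.drop s ++ (rep u (k-1-↑i) ++ v), ?_, ?_⟩
      · have : v.take s ++ ([] ++ (v.drop s ++ (rep u (k-1-↑i) ++ v)))
            = v ++ (rep u (k-1-↑i) ++ v) := by
          rw [List.nil_append, ← List.append_assoc, List.take_append_drop]
        simp only [List.append_assoc]
        rw [this]
      · have hrepk : rep u k = rep u ↑i ++ (u ++ rep u (k-1-↑i)) := by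
          have h1 : rep u k = rep u (↑i + (1 + (k-1-↑i))) := by congr 1; omega
          rw [h1, rep_add, rep_add]; simp [rep]
        rw [hrepk, hu]
        simp [List.append_assoc]

end MkAux

/-- for the SRS `⟨A ∣ 1 → v⟩` where `v` contains at least two
distinct letters, `M_k` is embeddable in `G_S` for every `k ≥ 1`. -/
theorem Mk_embeddable_special {A : Type*} (v : List A)
    (hv : ∃ a ∈ v, ∃ b ∈ v, a ≠ b) (k : ℕ) (hk : 1 ≤ k) :
    MkEmbeddable ([] : List A) v k := by
  exact MkAux.main v (Classical.choose (MkAux.exists_diff v hv))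
    (Classical.choose_spec (MkAux.exists_diff v hv)).1
    (Classical.choose_spec (MkAux.exists_diff v hv)).2 k hk
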